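/- For every player n, every nominal input sequence ū, and every direction δu: D²J_n(ū)[δu, δu] = Σ_{k=0}^T [δx_k; δu_k]ᵀ [[M_{n,k}^{xx}, M_{n,k}^{xu}],[M_{n,k}^{ux}, M_{n,k}^{uu}]] [δx_k; δu_k] + Σ_{k=0}^T M_{n,k}^{1x} Δx_k, where δx_k and Δx_k are the first- and second-order sensitivities of x_k at ū along δu. -/

import Mathlib

open Matrix BigOperators Filter

noncomputable section

namespace DynGame

/-- joint input coordinate index: player `n`, coordinate `i < m n` -/
abbrev UIdx (N : ℕ) (m : Fin N → ℕ) := (n : Fin N) × Fin (m n)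
/-- state vector -/
abbrev Stt (nx : ℕ) := Fin nx → ℝ
/-- joint input vector -/
abbrev Inp (N : ℕ) (m : Fin N → ℕ) := UIdx N m → ℝ
/-- input sequence over times 0,…,T -/
abbrev Seq (T N : ℕ) (m : Fin N → ℕ) := Fin (T+1) → Inp N m
/-- joint (state, input) index, of size nx + nu -/
abbrev ZIdx (nx N : ℕ) (m : Fin N → ℕ) := Fin nx ⊕ UIdx N m
/-- extended index of size 1 + nx + nu -/
abbrev Ix (nx N : ℕ) (m : Fin N → ℕ) := Unit ⊕ ZIdx nx N m
/-- extended state index of size 1 + nx -/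
abbrev Jx (nx : ℕ) := Unit ⊕ Fin nx

/-- problem data: dynamics, stage costs, initial state -/
structure Setup (T nx N : ℕ) (m : Fin N → ℕ) where
  f : ℕ → Stt nx → Inp N m → Stt nx
  c : Fin N → ℕ → Stt nx → Inp N m → ℝ
  x0 : Stt nx

variable {T nx N : ℕ} {m : Fin N → ℕ}

/-- extend an input sequence to all of ℕ (by zero beyond T) -/
def extSeq (u : Seq T N m) : ℕ → Inp N m := fun k => if h : k < T + 1 then u ⟨k, h⟩ else 0

/-- trajectory generated by input sequence `u` -/
def traj (P : Setup T nx N m) (u : Seq T N m) : ℕ → Stt nx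
  | 0 => P.x0
  | k + 1 => P.f k (traj P u k) (extSeq u k)

/-- player `n`'s total cost -/
def J (P : Setup T nx N m) (n : Fin N) (u : Seq T N m) : ℝ :=
  ∑ k ∈ Finset.range (T + 1), P.c n k (traj P u k) (extSeq u k)

/-- stacked vector of the partial gradients ∂Jₙ/∂u_{n,:} -/
def calJ (P : Setup T nx N m) (u : Seq T N m) : Seq T N m :=
  fun k p => fderiv ℝ (J P p.1) u (Pi.single k (Pi.single p 1))

/-- dynamics as a function of the joint (state,input) pair -/
def fpair (P : Setup T nx N m) (k : ℕ) : Stt nx × Inp N m → Stt nx := fun z => P.f k z.1 z.2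

/-- cost as a function of the joint (state,input) pair -/
def cpair (P : Setup T nx N m) (n : Fin N) (k : ℕ) : Stt nx × Inp N m → ℝ := fun z => P.c n k z.1 z.2

/-- nominal (state,input) pair at time k -/
def zbar (P : Setup T nx N m) (ub : Seq T N m) (k : ℕ) : Stt nx × Inp N m :=
  (traj P ub k, extSeq ub k)

/-- coordinate basis vector of the joint (state,input) space -/
def zbasis (w : ZIdx nx N m) : Stt nx × Inp N m :=
  Sum.elim (fun i => (Pi.single i 1, 0)) (fun p => ((0 : Stt nx), Pi.single p 1)) w

/-- A_k = ∂f_k/∂x(x̄_k, ū_k) -/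
def Amat (P : Setup T nx N m) (ub : Seq T N m) (k : ℕ) : Matrix (Fin nx) (Fin nx) ℝ :=
  fun i j => fderiv ℝ (fun x => P.f k x (extSeq ub k) i) (traj P ub k) (Pi.single j 1)

/-- B_k = ∂f_k/∂u(x̄_k, ū_k) -/
def Bmat (P : Setup T nx N m) (ub : Seq T N m) (k : ℕ) : Matrix (Fin nx) (UIdx N m) ℝ :=
  fun i p => fderiv ℝ (fun v => P.f k (traj P ub k) v i) (extSeq ub k) (Pi.single p 1)

/-- G_k^l : Hessian of the l-th component of f_k w.r.t. the joint variable (x,u) -/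
def Gmat (P : Setup T nx N m) (ub : Seq T N m) (k : ℕ) (l : Fin nx) :
    Matrix (ZIdx nx N m) (ZIdx nx N m) ℝ :=
  fun a b =>
    fderiv ℝ (fun z => fderiv ℝ (fun w => fpair P k w l) z (zbasis a)) (zbar P ub k) (zbasis b)

/-- M_{n,k}^{1x} = ∂c_{n,k}/∂x (row vector) -/
def M1x (P : Setup T nx N m) (ub : Seq T N m) (n : Fin N) (k : ℕ) : Fin nx → ℝ :=
  fun j => fderiv ℝ (cpair P n k) (zbar P ub k) (zbasis (Sum.inl j))

/-- M_{n,k}^{1u} = ∂c_{n,k}/∂u (row vector) -/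
def M1u (P : Setup T nx N m) (ub : Seq T N m) (n : Fin N) (k : ℕ) : UIdx N m → ℝ :=
  fun p => fderiv ℝ (cpair P n k) (zbar P ub k) (zbasis (Sum.inr p))

/-- Hessian blocks of c_{n,k} w.r.t. the joint variable (x,u) -/
def M2 (P : Setup T nx N m) (ub : Seq T N m) (n : Fin N) (k : ℕ) :
    Matrix (ZIdx nx N m) (ZIdx nx N m) ℝ :=
  fun w w' =>
    fderiv ℝ (fun z => fderiv ℝ (cpair P n k) z (zbasis w)) (zbar P ub k) (zbasis w')

/-- the matrix M_{n,k} of the paper -/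
def Mmat (P : Setup T nx N m) (ub : Seq T N m) (n : Fin N) (k : ℕ) :
    Matrix (Ix nx N m) (Ix nx N m) ℝ :=
  fun a b =>
    match a, b with
    | Sum.inl _, Sum.inl _ => 2 * P.c n k (traj P ub k) (extSeq ub k)
    | Sum.inl _, Sum.inr w => Sum.elim (M1x P ub n k) (M1u P ub n k) w
    | Sum.inr w, Sum.inl _ => Sum.elim (M1x P ub n k) (M1u P ub n k) w
    | Sum.inr w, Sum.inr w' => M2 P ub n k w w'

/-- vector [1; δx; δu] -/
def vec1 (δx : Stt nx) (δu : Inp N m) : Ix nx N m → ℝ :=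
  Sum.elim (fun _ => (1 : ℝ)) (Sum.elim δx δu)

/-- vector [1; δx] -/
def vecj (δx : Stt nx) : Jx nx → ℝ := Sum.elim (fun _ => (1 : ℝ)) δx

/-- the matrix F formed by stacking the rows Γ_n^{uₙ u} -/
def Fof (Γ : Fin N → Matrix (Ix nx N m) (Ix nx N m) ℝ) : Matrix (UIdx N m) (UIdx N m) ℝ :=
  fun p q => Γ p.1 (Sum.inr (Sum.inr p)) (Sum.inr (Sum.inr q))

/-- the matrix P formed by stacking the blocks Γ_n^{uₙ x} -/
def Pof (Γ : Fin N → Matrix (Ix nx N m) (Ix nx N m) ℝ) : Matrix (UIdx N m) (Fin nx) ℝ :=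
  fun p j => Γ p.1 (Sum.inr (Sum.inr p)) (Sum.inr (Sum.inl j))

/-- the vector H formed by stacking the blocks Γ_n^{uₙ 1} -/
def Hof (Γ : Fin N → Matrix (Ix nx N m) (Ix nx N m) ℝ) : Inp N m :=
  fun p => Γ p.1 (Sum.inr (Sum.inr p)) (Sum.inl ())

/-- s = −F⁻¹ H -/
def sof (Γ : Fin N → Matrix (Ix nx N m) (Ix nx N m) ℝ) : Inp N m :=
  -((Fof Γ)⁻¹ *ᵥ Hof Γ)

/-- K = −F⁻¹ P -/
def Kof (Γ : Fin N → Matrix (Ix nx N m) (Ix nx N m) ℝ) : Matrix (UIdx N m) (Fin nx) ℝ :=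
  -((Fof Γ)⁻¹ * Pof Γ)

/-- the matrix [[1,0,0],[0,A,B]] -/
def Cmat (A : Matrix (Fin nx) (Fin nx) ℝ) (B : Matrix (Fin nx) (UIdx N m) ℝ) :
    Matrix (Jx nx) (Ix nx N m) ℝ :=
  fun a b =>
    match a, b with
    | Sum.inl _, Sum.inl _ => 1
    | Sum.inl _, Sum.inr _ => 0
    | Sum.inr _, Sum.inl _ => 0
    | Sum.inr i, Sum.inr (Sum.inl j) => A i j
    | Sum.inr i, Sum.inr (Sum.inr p) => B i p

/-- extend an (x,u)-square matrix by zeros to the 1+(x,u) index set -/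
def Dext (D : Matrix (ZIdx nx N m) (ZIdx nx N m) ℝ) : Matrix (Ix nx N m) (Ix nx N m) ℝ :=
  fun a b =>
    match a, b with
    | Sum.inr w, Sum.inr w' => D w w'
    | _, _ => 0

/-- the matrix [[1,0],[0,I],[s,K]] -/
def Emat (s : Inp N m) (K : Matrix (UIdx N m) (Fin nx) ℝ) : Matrix (Ix nx N m) (Jx nx) ℝ :=
  fun a b =>
    match a, b with
    | Sum.inl _, Sum.inl _ => 1
    | Sum.inl _, Sum.inr _ => 0
    | Sum.inr (Sum.inl _), Sum.inl _ => 0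
    | Sum.inr (Sum.inl i), Sum.inr j => if i = j then 1 else 0
    | Sum.inr (Sum.inr p), Sum.inl _ => s p
    | Sum.inr (Sum.inr p), Sum.inr j => K p j

/-- Γ_n = M_n + Cᵀ S_n C + Dext(D_n), the common backpropagation step of both recursions -/
def gammaFam (P : Setup T nx N m) (ub : Seq T N m)
    (S : Fin N → Matrix (Jx nx) (Jx nx) ℝ) (k : ℕ)
    (D : Fin N → Matrix (ZIdx nx N m) (ZIdx nx N m) ℝ) :
    Fin N → Matrix (Ix nx N m) (Ix nx N m) ℝ :=
  fun n =>
    Mmat P ub n k + (Cmat (Amat P ub k) (Bmat P ub k))ᵀ * S n * Cmat (Amat P ub k) (Bmat P ub k)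
      + Dext (D n)

/-- S_n = Eᵀ Γ_n E : substitution of the equilibrium affine policy -/
def subPolicy (Γ : Fin N → Matrix (Ix nx N m) (Ix nx N m) ℝ) :
    Fin N → Matrix (Jx nx) (Jx nx) ℝ :=
  fun n => (Emat (sof Γ) (Kof Γ))ᵀ * Γ n * Emat (sof Γ) (Kof Γ)

/-- Ω recursion, indexed by number of steps from the end: `omegaAux j = Ω_{·,T+1-j}` -/
def omegaAux (P : Setup T nx N m) (ub : Seq T N m) (n : Fin N) : ℕ → (Fin nx → ℝ)
  | 0 => 0
  | j + 1 => M1x P ub n (T - j) + omegaAux P ub n j ᵥ* Amat P ub (T - j)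

/-- Ω_{n,k} of the Newton backward recursion -/
def Omega (P : Setup T nx N m) (ub : Seq T N m) (n : Fin N) (k : ℕ) : Fin nx → ℝ :=
  omegaAux P ub n (T + 1 - k)

/-- Newton backward recursion for S, indexed by steps from the end: `newtSAux j = S_{·,T+1-j}` -/
def newtSAux (P : Setup T nx N m) (ub : Seq T N m) : ℕ → Fin N → Matrix (Jx nx) (Jx nx) ℝ
  | 0 => fun _ => 0
  | j + 1 =>
    subPolicy (gammaFam P ub (newtSAux P ub j) (T - j)
      (fun n => ∑ l, omegaAux P ub n j l • Gmat P ub (T - j) l))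

/-- D_{n,k} of the Newton backward recursion -/
def newtD (P : Setup T nx N m) (ub : Seq T N m) (k : ℕ) :
    Fin N → Matrix (ZIdx nx N m) (ZIdx nx N m) ℝ :=
  fun n => ∑ l, Omega P ub n (k + 1) l • Gmat P ub k l

/-- Γ_{n,k} of the Newton backward recursion -/
def newtGamma (P : Setup T nx N m) (ub : Seq T N m) (k : ℕ) :
    Fin N → Matrix (Ix nx N m) (Ix nx N m) ℝ :=
  gammaFam P ub (newtSAux P ub (T - k)) k (newtD P ub k)

/-- S_{n,k} of the Newton backward recursion -/
def newtSmat (P : Setup T nx N m) (ub : Seq T N m) (k : ℕ) :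
    Fin N → Matrix (Jx nx) (Jx nx) ℝ :=
  newtSAux P ub (T + 1 - k)

def newtF (P : Setup T nx N m) (ub : Seq T N m) (k : ℕ) : Matrix (UIdx N m) (UIdx N m) ℝ :=
  Fof (newtGamma P ub k)
def newtP (P : Setup T nx N m) (ub : Seq T N m) (k : ℕ) : Matrix (UIdx N m) (Fin nx) ℝ :=
  Pof (newtGamma P ub k)
def newtH (P : Setup T nx N m) (ub : Seq T N m) (k : ℕ) : Inp N m :=
  Hof (newtGamma P ub k)
def newts (P : Setup T nx N m) (ub : Seq T N m) (k : ℕ) : Inp N m :=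
  sof (newtGamma P ub k)
def newtK (P : Setup T nx N m) (ub : Seq T N m) (k : ℕ) : Matrix (UIdx N m) (Fin nx) ℝ :=
  Kof (newtGamma P ub k)

/-- DDP backward recursion for S̃, indexed by steps from the end: `ddpSAux j = S̃_{·,T+1-j}` -/
def ddpSAux (P : Setup T nx N m) (ub : Seq T N m) : ℕ → Fin N → Matrix (Jx nx) (Jx nx) ℝ
  | 0 => fun _ => 0
  | j + 1 =>
    subPolicy (gammaFam P ub (ddpSAux P ub j) (T - j)
      (fun n => ∑ l, (ddpSAux P ub j n) (Sum.inl ()) (Sum.inr l) • Gmat P ub (T - j) l))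

/-- D̃_{n,k} of the DDP backward recursion -/
def ddpD (P : Setup T nx N m) (ub : Seq T N m) (k : ℕ) :
    Fin N → Matrix (ZIdx nx N m) (ZIdx nx N m) ℝ :=
  fun n => ∑ l, (ddpSAux P ub (T - k) n) (Sum.inl ()) (Sum.inr l) • Gmat P ub k l

/-- Γ̃_{n,k} of the DDP backward recursion -/
def ddpGamma (P : Setup T nx N m) (ub : Seq T N m) (k : ℕ) :
    Fin N → Matrix (Ix nx N m) (Ix nx N m) ℝ :=
  gammaFam P ub (ddpSAux P ub (T - k)) k (ddpD P ub k)

/-- S̃_{n,k} of the DDP backward recursion -/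
def ddpSmat (P : Setup T nx N m) (ub : Seq T N m) (k : ℕ) :
    Fin N → Matrix (Jx nx) (Jx nx) ℝ :=
  ddpSAux P ub (T + 1 - k)

def ddpF (P : Setup T nx N m) (ub : Seq T N m) (k : ℕ) : Matrix (UIdx N m) (UIdx N m) ℝ :=
  Fof (ddpGamma P ub k)
def ddpPmat (P : Setup T nx N m) (ub : Seq T N m) (k : ℕ) : Matrix (UIdx N m) (Fin nx) ℝ :=
  Pof (ddpGamma P ub k)
def ddpH (P : Setup T nx N m) (ub : Seq T N m) (k : ℕ) : Inp N m :=
  Hof (ddpGamma P ub k)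
def ddps (P : Setup T nx N m) (ub : Seq T N m) (k : ℕ) : Inp N m :=
  sof (ddpGamma P ub k)
def ddpK (P : Setup T nx N m) (ub : Seq T N m) (k : ℕ) : Matrix (UIdx N m) (Fin nx) ℝ :=
  Kof (ddpGamma P ub k)

/-- Newton forward pass: states δx_k -/
def newtDx (P : Setup T nx N m) (ub : Seq T N m) : ℕ → Stt nx
  | 0 => 0
  | k + 1 =>
    Amat P ub k *ᵥ newtDx P ub k
      + Bmat P ub k *ᵥ (newtK P ub k *ᵥ newtDx P ub k + newts P ub k)

/-- Newton forward pass: inputs δu_k = K_k δx_k + s_k -/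
def newtDu (P : Setup T nx N m) (ub : Seq T N m) (k : ℕ) : Inp N m :=
  newtK P ub k *ᵥ newtDx P ub k + newts P ub k

/-- DDP forward pass: states x_k^D -/
def ddpX (P : Setup T nx N m) (ub : Seq T N m) : ℕ → Stt nx
  | 0 => P.x0
  | k + 1 =>
    P.f k (ddpX P ub k)
      (extSeq ub k + (ddpK P ub k *ᵥ (ddpX P ub k - traj P ub k) + ddps P ub k))

/-- DDP forward pass: δx_k^D = x_k^D − x̄_k -/
def ddpDx (P : Setup T nx N m) (ub : Seq T N m) (k : ℕ) : Stt nx :=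
  ddpX P ub k - traj P ub k

/-- DDP forward pass: δu_k^D = K̃_k δx_k^D + s̃_k -/
def ddpDu (P : Setup T nx N m) (ub : Seq T N m) (k : ℕ) : Inp N m :=
  ddpK P ub k *ᵥ ddpDx P ub k + ddps P ub k

/-- one full DDP iteration on input sequences -/
def ddpStep (P : Setup T nx N m) (ub : Seq T N m) : Seq T N m :=
  fun t => ub t + ddpDu P ub (t : ℕ)

/-- first-order sensitivity of the state x_k w.r.t. the input sequence, along δu -/
def dx1 (P : Setup T nx N m) (ub δu : Seq T N m) (k : ℕ) : Stt nx :=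
  fun i => fderiv ℝ (fun u => traj P u k i) ub δu

/-- second-order sensitivity of the state x_k w.r.t. the input sequence, along (δu,δu) -/
def dx2 (P : Setup T nx N m) (ub δu : Seq T N m) (k : ℕ) : Stt nx :=
  fun l => fderiv ℝ (fun u => fderiv ℝ (fun u' => traj P u' k l) u δu) ub δu

/-- recursively defined first-order state perturbation δx_k -/
def dxRec (P : Setup T nx N m) (ub δu : Seq T N m) : ℕ → Stt nx
  | 0 => 0
  | k + 1 => Amat P ub k *ᵥ dxRec P ub δu k + Bmat P ub k *ᵥ extSeq δu k

/-- the quadratic vector R_k(δx, δu), with l-th entry [δx;δu]ᵀ G_k^l [δx;δu] -/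
def Rquad (P : Setup T nx N m) (ub : Seq T N m) (k : ℕ) (δx : Stt nx) (δu : Inp N m) :
    Stt nx :=
  fun l => Sum.elim δx δu ⬝ᵥ (Gmat P ub k l *ᵥ Sum.elim δx δu)

/-- recursively defined second-order state perturbation Δx_k -/
def DxRec (P : Setup T nx N m) (ub δu : Seq T N m) : ℕ → Stt nx
  | 0 => 0
  | k + 1 =>
    Amat P ub k *ᵥ DxRec P ub δu k + Rquad P ub k (dxRec P ub δu k) (extSeq δu k)

/-- partial Jacobian ∂x_k/∂u_i at ū -/
def Xjac (P : Setup T nx N m) (ub : Seq T N m) (k : ℕ) (i : Fin (T+1)) :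
    Matrix (Fin nx) (UIdx N m) ℝ :=
  fun l a => fderiv ℝ (fun u => traj P u k l) ub (Pi.single i (Pi.single a 1))

/-- mixed second partial derivatives ∂²x_k^l/∂u_i∂u_j at ū -/
def Xhess (P : Setup T nx N m) (ub : Seq T N m) (k : ℕ) (l : Fin nx) (i j : Fin (T+1)) :
    Matrix (UIdx N m) (UIdx N m) ℝ :=
  fun a b =>
    fderiv ℝ (fun u => fderiv ℝ (fun u' => traj P u' k l) u (Pi.single i (Pi.single a 1))) ub
      (Pi.single j (Pi.single b 1))

/-- restarted trajectory: state at time k+j when restarting from ξ at time k with nominal inputs -/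
def trajFrom (P : Setup T nx N m) (ub : Seq T N m) (k : ℕ) (ξ : Stt nx) : ℕ → Stt nx
  | 0 => ξ
  | j + 1 => P.f (k + j) (trajFrom P ub k ξ j) (extSeq ub (k + j))

/-- player n's cost-to-go from time k as a function of the time-k state -/
def cost2go (P : Setup T nx N m) (ub : Seq T N m) (n : Fin N) (k : ℕ) (ξ : Stt nx) : ℝ :=
  ∑ j ∈ Finset.range (T + 1 - k), P.c n (k + j) (trajFrom P ub k ξ j) (extSeq ub (k + j))

/-- second-order Taylor polynomial of g at z0, evaluated at z -/
def taylor2 {E : Type*} [NormedAddCommGroup E] [NormedSpace ℝ E] (g : E → ℝ) (z0 z : E) : ℝ :=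
  g z0 + fderiv ℝ g z0 (z - z0)
    + (1 / 2) * fderiv ℝ (fun w => fderiv ℝ g w (z - z0)) z0 (z - z0)

/-- DDP approximate value functions, indexed by steps from the end: `ddpVAux j = Ṽ_{·,T+1-j}` -/
def ddpVAux (P : Setup T nx N m) (ub : Seq T N m) : ℕ → Fin N → Stt nx → ℝ
  | 0 => fun _ _ => 0
  | j + 1 => fun n x =>
    taylor2 (fun z : Stt nx × Inp N m => cpair P n (T - j) z + ddpVAux P ub j n (fpair P (T - j) z))
      (zbar P ub (T - j))
      (x, extSeq ub (T - j)
        + (ddpK P ub (T - j) *ᵥ (x - traj P ub (T - j)) + ddps P ub (T - j)))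

/-- DDP approximate state-action value function Q̃_{n,k} -/
def ddpQ (P : Setup T nx N m) (ub : Seq T N m) (k : ℕ) (n : Fin N)
    (x : Stt nx) (u : Inp N m) : ℝ :=
  taylor2 (fun z : Stt nx × Inp N m => cpair P n k z + ddpVAux P ub (T - k) n (fpair P k z))
    (zbar P ub k) (x, u)

/-- DDP approximate value function Ṽ_{n,k} -/
def ddpV (P : Setup T nx N m) (ub : Seq T N m) (k : ℕ) (n : Fin N) (x : Stt nx) : ℝ :=
  ddpVAux P ub (T + 1 - k) n x

/-- Newton-game value functions, indexed by steps from the end: `newtVAux j = V_{·,T+1-j}` -/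
def newtVAux (P : Setup T nx N m) (ub : Seq T N m) : ℕ → Fin N → Stt nx → Stt nx → ℝ
  | 0 => fun _ _ _ => 0
  | j + 1 => fun n δx Δx =>
    (1 / 2) * (vec1 δx (newtK P ub (T - j) *ᵥ δx + newts P ub (T - j)) ⬝ᵥ
        (Mmat P ub n (T - j) *ᵥ vec1 δx (newtK P ub (T - j) *ᵥ δx + newts P ub (T - j)))
      + M1x P ub n (T - j) ⬝ᵥ Δx)
    + newtVAux P ub j n
        (Amat P ub (T - j) *ᵥ δx
          + Bmat P ub (T - j) *ᵥ (newtK P ub (T - j) *ᵥ δx + newts P ub (T - j)))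
        (Amat P ub (T - j) *ᵥ Δx
          + Rquad P ub (T - j) δx (newtK P ub (T - j) *ᵥ δx + newts P ub (T - j)))

/-- Newton-game state-action value function Q_{n,k} -/
def newtQ (P : Setup T nx N m) (ub : Seq T N m) (k : ℕ) (n : Fin N)
    (δx Δx : Stt nx) (δu : Inp N m) : ℝ :=
  (1 / 2) * (vec1 δx δu ⬝ᵥ (Mmat P ub n k *ᵥ vec1 δx δu) + M1x P ub n k ⬝ᵥ Δx)
    + newtVAux P ub (T - k) n (Amat P ub k *ᵥ δx + Bmat P ub k *ᵥ δu)
        (Amat P ub k *ᵥ Δx + Rquad P ub k δx δu)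

/-- Newton-game value function V_{n,k} -/
def newtV (P : Setup T nx N m) (ub : Seq T N m) (k : ℕ) (n : Fin N) (δx Δx : Stt nx) : ℝ :=
  newtVAux P ub (T + 1 - k) n δx Δx

/-- replace player n's inputs in u* by w, keeping the others fixed -/
def combineInput (ustar : Seq T N m) (n : Fin N) (w : Fin (T+1) → Fin (m n) → ℝ) :
    Seq T N m :=
  fun k p => if h : p.1 = n then w k (Fin.cast (congrArg m h) p.2) else ustar k p



section Statement7Aux

variable {T nx N : ℕ} {m : Fin N → ℕ}

lemma extSeq_eq_proj {k : ℕ} (hk : k < T + 1) :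
    (fun u : Seq T N m => extSeq u k)
      = ⇑(ContinuousLinearMap.proj (R := ℝ) (φ := fun _ : Fin (T+1) => Inp N m) ⟨k, hk⟩) := by
  funext u
  simp [extSeq, hk]

lemma traj_contDiff (P : Setup T nx N m) (hf : ∀ k ≤ T, ContDiff ℝ 2 (fpair P k)) :
    ∀ k, k ≤ T + 1 → ContDiff ℝ 2 (fun u : Seq T N m => traj P u k) := by
  intro k
  induction k with
  | zero => exact fun _ => by simpa [traj] using (contDiff_const (c := P.x0))
  | succ k ih =>
    intro hk
    have hk' : k ≤ T := Nat.succ_le_succ_iff.mp hk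
    have hkb : k < T + 1 := Nat.lt_succ_of_le hk'
    have hext : ContDiff ℝ 2 (fun u : Seq T N m => extSeq u k) := by
      rw [extSeq_eq_proj hkb]
      exact (ContinuousLinearMap.proj (R := ℝ)
        (φ := fun _ : Fin (T+1) => Inp N m) ⟨k, hkb⟩).contDiff
    have hrw : (fun u : Seq T N m => traj P u (k+1))
        = fun u => fpair P k (traj P u k, extSeq u k) := rfl
    rw [hrw]
    exact (hf k hk').comp ((ContDiff.prodMk (ih (Nat.le_succ_of_le hk')) hext))

lemma phi_contDiff (P : Setup T nx N m) (hf : ∀ k ≤ T, ContDiff ℝ 2 (fpair P k))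
    {k : ℕ} (hk : k ≤ T) :
    ContDiff ℝ 2 (fun u : Seq T N m => ((traj P u k, extSeq u k) : Stt nx × Inp N m)) := by
  refine ContDiff.prodMk (traj_contDiff P hf k (Nat.le_succ_of_le hk)) ?_
  rw [extSeq_eq_proj (Nat.lt_succ_of_le hk)]
  exact (ContinuousLinearMap.proj (R := ℝ)
    (φ := fun _ : Fin (T+1) => Inp N m) ⟨k, Nat.lt_succ_of_le hk⟩).contDiff

lemma fderiv_eval {E ι : Type*} [NormedAddCommGroup E] [NormedSpace ℝ E] [Fintype ι]
    [DecidableEq ι] {F : E → ι → ℝ} {x : E} (h : DifferentiableAt ℝ F x) (i : ι) (v : E) :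
    fderiv ℝ (fun u => F u i) x v = fderiv ℝ F x v i := by
  have h2 : (fun u => F u i)
      = ⇑(ContinuousLinearMap.proj (R := ℝ) (φ := fun _ : ι => ℝ) i) ∘ F := rfl
  rw [h2, fderiv_comp x (ContinuousLinearMap.differentiableAt _) h]
  simp [ContinuousLinearMap.fderiv]

lemma diff_fderiv_apply {E F : Type*} [NormedAddCommGroup E] [NormedSpace ℝ E]
    [NormedAddCommGroup F] [NormedSpace ℝ F] {Fn : E → F} (h : ContDiff ℝ 2 Fn) (δu : E) :
    Differentiable ℝ (fun u => fderiv ℝ Fn u δu) := by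
  have h1 : ContDiff ℝ 1 (fderiv ℝ Fn) := h.fderiv_right (by norm_num)
  exact (ContinuousLinearMap.apply ℝ F δu).differentiable.comp (h1.differentiable one_ne_zero)

lemma second_deriv_comp {E F : Type*} [NormedAddCommGroup E] [NormedSpace ℝ E]
    [NormedAddCommGroup F] [NormedSpace ℝ F]
    (g : F → ℝ) (φ : E → F) (hg : ContDiff ℝ 2 g) (hφ : ContDiff ℝ 2 φ)
    (ub δu : E) :
    fderiv ℝ (fun u => fderiv ℝ (fun u' => g (φ u')) u δu) ub δu
      = fderiv ℝ (fderiv ℝ g) (φ ub) (fderiv ℝ φ ub δu) (fderiv ℝ φ ub δu)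
        + fderiv ℝ g (φ ub) (fderiv ℝ (fun u => fderiv ℝ φ u δu) ub δu) := by
  have hg1 : ContDiff ℝ 1 (fderiv ℝ g) := hg.fderiv_right (by norm_num)
  have hgd : Differentiable ℝ g := hg.differentiable two_ne_zero
  have hφd : Differentiable ℝ φ := hφ.differentiable two_ne_zero
  have hφ1 : Differentiable ℝ (fun u => fderiv ℝ φ u δu) := diff_fderiv_apply hφ δu
  set c : E → F →L[ℝ] ℝ := fun u => fderiv ℝ g (φ u) with hc
  set v : E → F := fun u => fderiv ℝ φ u δu with hv
  have hcd : DifferentiableAt ℝ c ub :=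
    ((hg1.differentiable one_ne_zero) (φ ub)).comp ub (hφd ub)
  have hvd : DifferentiableAt ℝ v ub := hφ1 ub
  have hrw : (fun u => fderiv ℝ (fun u' => g (φ u')) u δu) = fun u => c u (v u) := by
    funext u
    have hcomp := fderiv_comp u (hgd (φ u)) (hφd u)
    calc fderiv ℝ (fun u' => g (φ u')) u δu
        = fderiv ℝ (g ∘ φ) u δu := rfl
      _ = ((fderiv ℝ g (φ u)).comp (fderiv ℝ φ u)) δu := by rw [hcomp]
      _ = c u (v u) := rfl
  rw [hrw, fderiv_clm_apply hcd hvd]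
  have hcderiv : fderiv ℝ c ub δu = fderiv ℝ (fderiv ℝ g) (φ ub) (fderiv ℝ φ ub δu) := by
    have h2 : c = (fderiv ℝ g) ∘ φ := rfl
    rw [h2, fderiv_comp ub ((hg1.differentiable one_ne_zero) (φ ub)) (hφd ub)]
    rfl
  simp only [ContinuousLinearMap.add_apply, ContinuousLinearMap.comp_apply,
    ContinuousLinearMap.flip_apply]
  rw [hcderiv]
  ring

lemma sum_single_smul {ι : Type*} [Fintype ι] [DecidableEq ι] (v : ι → ℝ) :
    ∑ i, v i • (Pi.single i 1 : ι → ℝ) = v := by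
  funext j
  simp [Finset.sum_apply, Pi.single_apply]

lemma pair_expand (a : Stt nx) (b : Inp N m) :
    ((a, b) : Stt nx × Inp N m) = ∑ w : ZIdx nx N m, Sum.elim a b w • zbasis w := by
  refine Prod.ext ?_ ?_
  · rw [Prod.fst_sum, Fintype.sum_sum_type]
    simp only [Prod.smul_fst, zbasis, Sum.elim_inl, Sum.elim_inr, smul_zero,
      Finset.sum_const_zero, add_zero]
    exact (sum_single_smul a).symm
  · rw [Prod.snd_sum, Fintype.sum_sum_type]
    simp only [Prod.smul_snd, zbasis, Sum.elim_inl, Sum.elim_inr, smul_zero,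
      Finset.sum_const_zero, zero_add]
    exact (sum_single_smul b).symm

lemma fst_expand (a : Stt nx) :
    ((a, 0) : Stt nx × Inp N m) = ∑ l : Fin nx, a l • zbasis (Sum.inl l) := by
  refine Prod.ext ?_ ?_
  · rw [Prod.fst_sum]
    simp only [Prod.smul_fst, zbasis, Sum.elim_inl]
    exact (sum_single_smul a).symm
  · rw [Prod.snd_sum]
    simp [zbasis]

lemma second_bilinear (g : Stt nx × Inp N m → ℝ) (hg : ContDiff ℝ 2 g)
    (z0 : Stt nx × Inp N m) (M : Matrix (ZIdx nx N m) (ZIdx nx N m) ℝ)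
    (hM : ∀ w w', M w w' = fderiv ℝ (fun z => fderiv ℝ g z (zbasis w)) z0 (zbasis w'))
    (a : Stt nx) (b : Inp N m) :
    fderiv ℝ (fderiv ℝ g) z0 (a, b) (a, b)
      = Sum.elim a b ⬝ᵥ (M *ᵥ Sum.elim a b) := by
  have hgd : DifferentiableAt ℝ (fderiv ℝ g) z0 :=
    ((hg.fderiv_right (n := 2) (m := 1) (by norm_num)).differentiable one_ne_zero) z0
  have hMB : ∀ w w', M w w' = fderiv ℝ (fderiv ℝ g) z0 (zbasis w') (zbasis w) := by
    intro w w'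
    have h2 : (fun z => fderiv ℝ g z (zbasis w))
        = ⇑(ContinuousLinearMap.apply ℝ ℝ (zbasis w)) ∘ (fderiv ℝ g) := rfl
    rw [hM, h2, fderiv_comp z0 (ContinuousLinearMap.differentiableAt _) hgd]
    simp [ContinuousLinearMap.fderiv]
  have hexp := pair_expand a b
  conv_lhs => rw [hexp]
  have h1 : ∀ y : Stt nx × Inp N m,
      fderiv ℝ (fderiv ℝ g) z0 (∑ w : ZIdx nx N m, Sum.elim a b w • zbasis w) y
        = ∑ w : ZIdx nx N m, Sum.elim a b w * fderiv ℝ (fderiv ℝ g) z0 (zbasis w) y := by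
    intro y
    rw [_root_.map_sum, ContinuousLinearMap.sum_apply]
    refine Finset.sum_congr rfl fun w _ => ?_
    rw [_root_.map_smul, ContinuousLinearMap.smul_apply, smul_eq_mul]
  have h2 : ∀ w : ZIdx nx N m,
      fderiv ℝ (fderiv ℝ g) z0 (zbasis w) (∑ w' : ZIdx nx N m, Sum.elim a b w' • zbasis w')
        = ∑ w' : ZIdx nx N m, Sum.elim a b w' * fderiv ℝ (fderiv ℝ g) z0 (zbasis w) (zbasis w') := by
    intro w
    rw [_root_.map_sum]
    refine Finset.sum_congr rfl fun w' _ => ?_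
    rw [_root_.map_smul, smul_eq_mul]
  rw [h1]
  simp only [h2]
  simp only [dotProduct, Matrix.mulVec, hMB, Finset.mul_sum]
  rw [Finset.sum_comm]
  refine Finset.sum_congr rfl fun w _ => Finset.sum_congr rfl fun w' _ => by ring

lemma fst_contract (g : Stt nx × Inp N m → ℝ) (z0 : Stt nx × Inp N m)
    (hgd : DifferentiableAt ℝ g z0) (a : Stt nx) :
    fderiv ℝ g z0 ((a, 0) : Stt nx × Inp N m)
      = ∑ l : Fin nx, fderiv ℝ g z0 (zbasis (Sum.inl l)) * a l := by
  rw [fst_expand a, _root_.map_sum]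
  refine Finset.sum_congr rfl fun l _ => ?_
  rw [_root_.map_smul, smul_eq_mul, mul_comm]

end Statement7Aux

/-- D²J_n(ū)[δu,δu] = Σ_k [δx_k;δu_k]ᵀ [[M^{xx},M^{xu}],[M^{ux},M^{uu}]] [δx_k;δu_k]
+ Σ_k M_{n,k}^{1x} Δx_k, with δx_k, Δx_k the first- and second-order sensitivities of x_k. -/
theorem statement7 (T nx N : ℕ) (m : Fin N → ℕ) (hnx : 1 ≤ nx) (P : Setup T nx N m)
    (hf : ∀ k ≤ T, ContDiff ℝ 2 (fpair P k))
    (hc : ∀ n : Fin N, ∀ k ≤ T, ContDiff ℝ 2 (cpair P n k)) :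
    ∀ (n : Fin N) (ub δu : Seq T N m),
      fderiv ℝ (fun u => fderiv ℝ (J P n) u δu) ub δu
        = ∑ k ∈ Finset.range (T + 1),
            Sum.elim (dx1 P ub δu k) (extSeq δu k) ⬝ᵥ
              (M2 P ub n k *ᵥ Sum.elim (dx1 P ub δu k) (extSeq δu k))
          + ∑ k ∈ Finset.range (T + 1), M1x P ub n k ⬝ᵥ dx2 P ub δu k := by
  intro n ub δu
  have hsum : ∀ k ∈ Finset.range (T + 1), k ≤ T := fun k hk => Nat.lt_succ_iff.mp (Finset.mem_range.mp hk)
  -- rewrite J as a sum of composites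
  have hJdef : J P n = fun u => ∑ k ∈ Finset.range (T + 1),
      cpair P n k (traj P u k, extSeq u k) := rfl
  have hCk : ∀ k ∈ Finset.range (T + 1),
      ContDiff ℝ 2 (fun u : Seq T N m => cpair P n k (traj P u k, extSeq u k)) := by
    intro k hk
    exact (hc n k (hsum k hk)).comp (phi_contDiff P hf (hsum k hk))
  have hJ : (fun u : Seq T N m => fderiv ℝ (J P n) u δu)
      = fun u => ∑ k ∈ Finset.range (T + 1),
          fderiv ℝ (fun u' => cpair P n k (traj P u' k, extSeq u' k)) u δu := by
    funext u
    rw [hJdef, fderiv_fun_sum (fun k hk => ((hCk k hk).differentiable two_ne_zero) u)]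
    rw [ContinuousLinearMap.sum_apply]
  rw [hJ, fderiv_fun_sum (fun k hk => (diff_fderiv_apply (hCk k hk) δu) ub),
    ContinuousLinearMap.sum_apply, ← Finset.sum_add_distrib]
  refine Finset.sum_congr rfl fun k hk => ?_
  have hkT : k ≤ T := hsum k hk
  have hgC : ContDiff ℝ 2 (cpair P n k) := hc n k hkT
  have hφC : ContDiff ℝ 2 (fun u : Seq T N m => ((traj P u k, extSeq u k) : Stt nx × Inp N m)) := phi_contDiff P hf hkT
  have htraj : ContDiff ℝ 2 (fun u : Seq T N m => traj P u k) :=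
    traj_contDiff P hf k (Nat.le_succ_of_le hkT)
  have hkb : k < T + 1 := Nat.lt_succ_of_le hkT
  -- first-order sensitivity identification
  have hD1 : ∀ u : Seq T N m,
      fderiv ℝ (fun u' : Seq T N m => ((traj P u' k, extSeq u' k) : Stt nx × Inp N m)) u δu
        = (fderiv ℝ (fun u' => traj P u' k) u δu, extSeq δu k) := by
    intro u
    rw [DifferentiableAt.fderiv_prodMk ((htraj.differentiable two_ne_zero) u)
      (by rw [extSeq_eq_proj hkb]
          exact (ContinuousLinearMap.proj (R := ℝ)
            (φ := fun _ : Fin (T+1) => Inp N m) ⟨k, hkb⟩).differentiableAt)]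
    refine Prod.ext rfl ?_
    show fderiv ℝ (fun u' : Seq T N m => extSeq u' k) u δu = extSeq δu k
    rw [extSeq_eq_proj hkb, ContinuousLinearMap.fderiv]
    simp [extSeq, hkb]
  have hdx1 : fderiv ℝ (fun u' => traj P u' k) ub δu = dx1 P ub δu k := by
    funext i
    exact (fderiv_eval ((htraj.differentiable two_ne_zero) ub) i δu).symm
  -- second-order sensitivity identification
  have hG : Differentiable ℝ (fun u : Seq T N m => fderiv ℝ (fun u' => traj P u' k) u δu) :=
    diff_fderiv_apply htraj δu
  have hD2 : fderiv ℝ (fun u => fderiv ℝ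
        (fun u' : Seq T N m => ((traj P u' k, extSeq u' k) : Stt nx × Inp N m)) u δu) ub δu
      = ((dx2 P ub δu k, 0) : Stt nx × Inp N m) := by
    have hstep : (fun u => fderiv ℝ
          (fun u' : Seq T N m => ((traj P u' k, extSeq u' k) : Stt nx × Inp N m)) u δu)
        = fun u => ((fderiv ℝ (fun u' => traj P u' k) u δu, extSeq δu k) : Stt nx × Inp N m) := by
      funext u; exact hD1 u
    rw [hstep, DifferentiableAt.fderiv_prodMk (hG ub) (differentiableAt_const _)]
    refine Prod.ext ?_ ?_
    · show fderiv ℝ (fun u : Seq T N m => fderiv ℝ (fun u' => traj P u' k) u δu) ub δu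
        = dx2 P ub δu k
      funext l
      have hinner : (fun u : Seq T N m => fderiv ℝ (fun u' => traj P u' k l) u δu)
          = fun u => fderiv ℝ (fun u' => traj P u' k) u δu l := by
        funext u
        exact fderiv_eval ((htraj.differentiable two_ne_zero) u) l δu
      have : dx2 P ub δu k l
          = fderiv ℝ (fun u : Seq T N m => fderiv ℝ (fun u' => traj P u' k) u δu) ub δu l := by
        show fderiv ℝ (fun u => fderiv ℝ (fun u' => traj P u' k l) u δu) ub δu
          = fderiv ℝ (fun u : Seq T N m => fderiv ℝ (fun u' => traj P u' k) u δu) ub δu l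
        rw [hinner]
        exact fderiv_eval (hG ub) l δu
      rw [this]
    · show fderiv ℝ (fun _ : Seq T N m => extSeq δu k) ub δu = 0
      rw [fderiv_fun_const]
      rfl
  -- put it together
  have key := second_deriv_comp (cpair P n k)
    (fun u : Seq T N m => ((traj P u k, extSeq u k) : Stt nx × Inp N m)) hgC hφC ub δu
  have hzb : ((traj P ub k, extSeq ub k) : Stt nx × Inp N m) = zbar P ub k := rfl
  rw [hD1 ub, hdx1, hD2, hzb] at key
  have hquad := second_bilinear (cpair P n k) hgC (zbar P ub k) (M2 P ub n k)
    (fun w w' => rfl) (dx1 P ub δu k) (extSeq δu k)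
  have hlin := fst_contract (cpair P n k) (zbar P ub k)
    ((hgC.differentiable two_ne_zero) _) (dx2 P ub δu k)
  calc fderiv ℝ (fun u => fderiv ℝ
        (fun u' => cpair P n k (traj P u' k, extSeq u' k)) u δu) ub δu
      = fderiv ℝ (fderiv ℝ (cpair P n k)) (zbar P ub k)
          (dx1 P ub δu k, extSeq δu k) (dx1 P ub δu k, extSeq δu k)
        + fderiv ℝ (cpair P n k) (zbar P ub k) ((dx2 P ub δu k, 0) : Stt nx × Inp N m) := key
    _ = Sum.elim (dx1 P ub δu k) (extSeq δu k) ⬝ᵥ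
          (M2 P ub n k *ᵥ Sum.elim (dx1 P ub δu k) (extSeq δu k))
        + M1x P ub n k ⬝ᵥ dx2 P ub δu k := by
        rw [hquad, hlin]
        rfl

end DynGame
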